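/- arXiv:2507.08186 — 2 statements merged into one kernel-verified Lean document; each statement's English description precedes it below -/
import Mathlib

section
/- Let (X,μ,T,α) be a Gibbs–Markov map with full branches, G a metrizable locally compact topological group with left Haar measure m_G, and ψ:X→G continuous. Fix g∈G and a bounded set E⊆G containing the identity with m_G(E)=m_G(E∖∂E)>0; assume condition (C) holds at g for E, and assume μ^n(Eg):=μ({x:ψ_n(x)∈Eg})>0 for all sufficiently large n. Then for every k∈ℕ and every u∈α_k, μ(u∩{x:ψ_n(x)∈Eg}) / μ({x:ψ_n(x)∈Eg}) → μ(u) as n→∞. -/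
open MeasureTheory Filter Topology Set
open scoped ENNReal

noncomputable section

/-- The cocycle `ψ_n(x) = ψ(T^{n-1} x) ⋯ ψ(T x) · ψ(x)` driven by `T`. -/
def cocycle {X G : Type*} [Monoid G] (T : X → X) (ψ : X → G) : ℕ → X → G
  | 0, _ => 1
  | n + 1, x => ψ (T^[n] x) * cocycle T ψ n x

/-- The collection `α_n` of (nonempty) `n`-cylinders `⋂_{j<n} T^{-j} a_j`, `a_j ∈ α`. -/
def cylinders {X : Type*} (T : X → X) (α : Set (Set X)) (n : ℕ) : Set (Set X) :=
  {c | c.Nonempty ∧ ∃ a : Fin n → Set X, (∀ j, a j ∈ α) ∧ c = ⋂ j : Fin n, T^[(j : ℕ)] ⁻¹' a j}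

/-- Birkhoff (ergodic) sums `φ_n = ∑_{j<n} φ ∘ T^j`. -/
def birkhoff {X : Type*} (T : X → X) (φ : X → ℝ) (n : ℕ) (x : X) : ℝ :=
  ∑ j ∈ Finset.range n, φ (T^[j] x)

/-- A Gibbs–Markov map with full branches: `μ` a Borel probability measure, `T`
measure-preserving, ergodic and topologically mixing, Markov with full branches for the
countable partition `α`, with big images, and a potential `φ` (the log Jacobian
`log dμ/d(μ∘T)`) that is locally Hölder (w.r.t. the separation metric, expressed through
cylinders) and has the Gibbs property. -/
structure IsGibbsMarkov {X : Type*} [MetricSpace X] [MeasurableSpace X]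
    (μ : Measure X) (T : X → X) (α : Set (Set X)) (φ : X → ℝ) : Prop where
  prob : IsProbabilityMeasure μ
  measurable_T : Measurable T
  measurePreserving : MeasurePreserving T μ μ
  ergodic : Ergodic T μ
  topMixing : ∀ U V : Set X, IsOpen U → IsOpen V → U.Nonempty → V.Nonempty →
    ∃ N, ∀ n ≥ N, (U ∩ T^[n] ⁻¹' V).Nonempty
  countable : α.Countable
  measurableSet : ∀ a ∈ α, MeasurableSet a
  nonempty : ∀ a ∈ α, a.Nonempty
  pairwiseDisjoint : α.PairwiseDisjoint id
  cover : ⋃₀ α = univ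
  fullBranches : ∀ a ∈ α, Set.BijOn T a univ
  bigImages : ∃ c : ℝ≥0∞, 0 < c ∧ ∀ a ∈ α, c ≤ μ (T '' a)
  holder : ∃ C > (0 : ℝ), ∃ β ∈ Set.Ioo (0 : ℝ) 1, ∀ n, ∀ c ∈ cylinders T α n,
    ∀ x ∈ c, ∀ y ∈ c, |φ x - φ y| ≤ C * β ^ n
  gibbs : ∃ C > (0 : ℝ), ∀ n : ℕ, ∀ c ∈ cylinders T α (n + 1), ∀ x ∈ c,
    (μ c).toReal / C ≤ Real.exp (birkhoff T φ (n + 1) x) ∧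
    Real.exp (birkhoff T φ (n + 1) x) ≤ C * (μ c).toReal

/-- Condition (D) at `g ∈ G`. -/
def CondD {X G : Type*} [MeasurableSpace X] [Group G]
    (μ : Measure X) (T : X → X) (α : Set (Set X)) (ψ : X → G) (g : G) : Prop :=
  ∀ ε > (0 : ℝ), ∀ n₀ : ℕ, ∃ n₁ > n₀, ∀ n ≥ n₁, ∃ n' ∈ Set.Icc n₀ n₁,
    ∀ b ∈ cylinders T α n',
      (μ {x | cocycle T ψ n x = g}).toReal / (1 + ε) ≤
          (μ (b ∩ {x | cocycle T ψ n x = g})).toReal / (μ b).toReal ∧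
      (μ (b ∩ {x | cocycle T ψ n x = g})).toReal / (μ b).toReal ≤
          (1 + ε) * (μ {x | cocycle T ψ n x = g}).toReal

/-- Right translate `E·g = {h·g : h ∈ E}` of a subset of a group. -/
def rmul {G : Type*} [Group G] (E : Set G) (g : G) : Set G := (· * g) '' E

/-- Condition (C) at `g ∈ G` for the bounded set `E ∋ e`. -/
def CondC {X G : Type*} [MeasurableSpace X] [Group G]
    (μ : Measure X) (T : X → X) (α : Set (Set X)) (ψ : X → G) (E : Set G) (g : G) : Prop :=
  ∀ ε > (0 : ℝ), ∀ n₀ : ℕ, ∃ n₁ > n₀, ∀ n ≥ n₁, ∃ n' ∈ Set.Icc n₀ n₁,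
    ∀ b ∈ cylinders T α n',
      (μ {x | cocycle T ψ n x ∈ rmul E g}).toReal / (1 + ε) ≤
          (μ (b ∩ {x | cocycle T ψ n x ∈ rmul E g})).toReal / (μ b).toReal ∧
      (μ (b ∩ {x | cocycle T ψ n x ∈ rmul E g})).toReal / (μ b).toReal ≤
          (1 + ε) * (μ {x | cocycle T ψ n x ∈ rmul E g}).toReal

/-- Condition (S): symmetry of the cocycle via a commuting, continuous (with continuous
inverse), invertible, measure-preserving map `S`. -/
def CondS {X G : Type*} [TopologicalSpace X] [MeasurableSpace X] [Group G]
    (μ : Measure X) (T : X → X) (ψ : X → G) : Prop :=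
  ∃ S : X ≃ₜ X, MeasurePreserving S μ μ ∧ (∀ x, S (T x) = T (S x)) ∧
    ∀ x, ψ (S x) = (ψ x)⁻¹

/-- Condition (CM) for the pair `(E, g)` and the set `F`: a quantitative mixing-type
inequality for the skew product `T_ψ(x,h) = (Tx, ψ(x)h)` on `X × G`. -/
def CondCM {X G : Type*} [MeasurableSpace X] [Group G] [TopologicalSpace G]
    [MeasurableSpace G]
    (μ : Measure X) (T : X → X) (α : Set (Set X)) (ψ : X → G)
    (mG : Measure G) (E : Set G) (g : G) (F : Set G) : Prop :=
  ∀ A : Set G, IsCompact (closure A) → mG (frontier A) = 0 →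
    ∀ k : ℕ, ∀ a ∈ cylinders T α k, ∃ N : ℕ, ∀ n ≥ N,
      (μ.prod mG) ((a ×ˢ F) ∩ {p : X × G | cocycle T ψ n p.1 * p.2 ∈ A}) ≤
        μ a * mG F * (mG A / mG E) * μ {x | cocycle T ψ n x ∈ rmul E g}

set_option linter.unusedSectionVars false
section Aux

variable {X : Type*} [MeasurableSpace X] {T : X → X} {α : Set (Set X)}

lemma cyl_measurableSet (hT : Measurable T) (hα : ∀ a ∈ α, MeasurableSet a)
    {n : ℕ} {c : Set X} (hc : c ∈ cylinders T α n) : MeasurableSet c := by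
  obtain ⟨-, a, ha, rfl⟩ := hc
  exact MeasurableSet.iInter fun j => (hα _ (ha j)).preimage (hT.iterate j)

lemma cyl_countable (hα : α.Countable) (n : ℕ) : (cylinders T α n).Countable := by
  have h1 : {f : Fin n → Set X | ∀ j, f j ∈ α}.Countable := Set.countable_pi fun _ => hα
  refine (h1.image (fun a : Fin n → Set X => ⋂ j : Fin n, T^[(j:ℕ)] ⁻¹' a j)).mono ?_
  rintro c ⟨-, a, ha, rfl⟩
  exact ⟨a, ha, rfl⟩

lemma seq_eq (hdisj : α.PairwiseDisjoint id) {n m : ℕ} {a : Fin n → Set X} {a' : Fin m → Set X}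
    (ha : ∀ j, a j ∈ α) (ha' : ∀ j, a' j ∈ α) {x : X}
    (hx : ∀ j : Fin n, T^[(j:ℕ)] x ∈ a j) (hx' : ∀ j : Fin m, T^[(j:ℕ)] x ∈ a' j)
    {i : Fin n} {i' : Fin m} (hii : (i:ℕ) = (i':ℕ)) : a i = a' i' := by
  by_contra hne
  exact Set.disjoint_left.mp (hdisj (ha i) (ha' i') hne) (hx i)
    (by simpa [hii] using hx' i')

lemma cyl_disjoint (hdisj : α.PairwiseDisjoint id) {n : ℕ} :
    (cylinders T α n).PairwiseDisjoint id := by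
  rintro c ⟨-, a, ha, rfl⟩ c' ⟨-, a', ha', rfl⟩ hne
  rw [Function.onFun, Set.disjoint_left]
  intro x hx hx'
  simp only [id, mem_iInter, mem_preimage] at hx hx'
  have h : a = a' := funext fun j => seq_eq hdisj ha ha' hx hx' rfl
  exact hne (by rw [h])

lemma cyl_subset (hdisj : α.PairwiseDisjoint id) {k n : ℕ} (hkn : k ≤ n)
    {u b : Set X} (hu : u ∈ cylinders T α k) (hb : b ∈ cylinders T α n)
    {x : X} (hxb : x ∈ b) (hxu : x ∈ u) : b ⊆ u := by
  obtain ⟨-, a', ha', rfl⟩ := hu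
  obtain ⟨-, a, ha, rfl⟩ := hb
  simp only [mem_iInter, mem_preimage] at hxb hxu
  intro y hy
  simp only [mem_iInter, mem_preimage] at hy ⊢
  intro j
  have h : a ⟨j, lt_of_lt_of_le j.2 hkn⟩ = a' j := seq_eq hdisj ha ha' hxb hxu rfl
  rw [← h]; exact hy _

lemma cyl_cover (hcov : ⋃₀ α = univ) (n : ℕ) (x : X) :
    ∃ c ∈ cylinders T α n, x ∈ c := by
  have h : ∀ j : Fin n, ∃ a ∈ α, T^[(j:ℕ)] x ∈ a := fun j =>
    mem_sUnion.mp (hcov ▸ mem_univ (T^[(j:ℕ)] x))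
  choose a ha hxa using h
  refine ⟨⋂ j : Fin n, T^[(j:ℕ)] ⁻¹' a j, ⟨⟨x, ?_⟩, a, ha, rfl⟩, ?_⟩ <;>
    · simp only [mem_iInter, mem_preimage]; exact hxa

lemma cyl_decomp {μ : Measure X} (hT : Measurable T) (hα : ∀ a ∈ α, MeasurableSet a)
    (hdisj : α.PairwiseDisjoint id) (hcov : ⋃₀ α = univ) (hαc : α.Countable)
    {k n : ℕ} (hkn : k ≤ n) {u : Set X} (hu : u ∈ cylinders T α k)
    (S : Set X) :
    μ (u ∩ S) = ∑' b : {b | b ∈ cylinders T α n ∧ b ⊆ u}, μ (↑b ∩ S) := by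
  set B := {b | b ∈ cylinders T α n ∧ b ⊆ u} with hBdef
  have hmeas : ∀ b ∈ B, MeasurableSet b := fun b hb => cyl_measurableSet hT hα hb.1
  have hUB : ⋃ b ∈ B, b = u := by
    apply subset_antisymm
    · exact iUnion₂_subset fun b hb => hb.2
    · intro x hx
      obtain ⟨c, hc, hxc⟩ := cyl_cover hcov n x
      exact mem_biUnion ⟨hc, cyl_subset hdisj hkn hu hc hxc hx⟩ hxc
  have hBc : B.Countable := (cyl_countable hαc n).mono fun b hb => hb.1
  calc μ (u ∩ S) = μ.restrict S u := (Measure.restrict_apply (cyl_measurableSet hT hα hu)).symm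
    _ = μ.restrict S (⋃ b ∈ B, b) := by rw [hUB]
    _ = ∑' b : B, μ.restrict S ↑b :=
        measure_biUnion hBc ((cyl_disjoint hdisj).subset fun b hb => hb.1) hmeas
    _ = ∑' b : B, μ (↑b ∩ S) := tsum_congr fun b => Measure.restrict_apply (hmeas b b.2)

end Aux

/-- Under condition (C) at `g` for `E`, and eventual positivity of
`μ^n(Eg)`, the masses `μ(u ∩ {ψ_n ∈ Eg}) / μ({ψ_n ∈ Eg})` of any cylinder `u` converge
to `μ(u)`. -/
theorem mn_tendsto_continuous
    {X : Type*} [MetricSpace X] [MeasurableSpace X] [BorelSpace X]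
    {G : Type*} [Group G] [TopologicalSpace G] [IsTopologicalGroup G]
    [TopologicalSpace.MetrizableSpace G] [LocallyCompactSpace G]
    [MeasurableSpace G] [BorelSpace G]
    (mG : Measure G) [mG.IsHaarMeasure]
    {μ : Measure X} {T : X → X} {α : Set (Set X)} {φ : X → ℝ}
    (hGM : IsGibbsMarkov μ T α φ)
    {ψ : X → G} (hψcont : Continuous ψ)
    (g : G) (E : Set G) (hEbdd : IsCompact (closure E)) (hEe : (1 : G) ∈ E)
    (hEfr : mG E = mG (E \ frontier E)) (hEpos : 0 < mG E)
    (hC : CondC μ T α ψ E g)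
    (hgpos : ∃ N : ℕ, ∀ n ≥ N, 0 < μ {x | cocycle T ψ n x ∈ rmul E g}) :
    ∀ k : ℕ, ∀ u ∈ cylinders T α k,
      Tendsto (fun n : ℕ =>
          (μ (u ∩ {x | cocycle T ψ n x ∈ rmul E g})).toReal /
            (μ {x | cocycle T ψ n x ∈ rmul E g}).toReal) atTop (𝓝 (μ u).toReal) := by

  haveI := hGM.prob
  intro k u hu
  obtain ⟨N, hN⟩ := hgpos
  rw [Metric.tendsto_atTop]
  intro ε hε
  set e : ℝ := min ε 1 / 2 with hedef
  have he : 0 < e := by positivity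
  have he1 : e ≤ 1 / 2 := by rw [hedef]; have := min_le_right ε 1; linarith
  have heε : e ≤ ε / 2 := by rw [hedef]; have := min_le_left ε 1; linarith
  obtain ⟨n₁, -, hCn⟩ := hC e he k
  refine ⟨max n₁ N, fun n hn => ?_⟩
  obtain ⟨n', ⟨hkn', -⟩, hb⟩ := hCn n (le_trans (le_max_left _ _) hn)
  set S := {x | cocycle T ψ n x ∈ rmul E g} with hSdef
  have hSpos : 0 < (μ S).toReal :=
    ENNReal.toReal_pos (hN n (le_trans (le_max_right _ _) hn)).ne' (measure_ne_top _ _)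
  have key : ∀ b ∈ cylinders T α n',
      (μ S).toReal / (1 + e) * (μ b).toReal ≤ (μ (b ∩ S)).toReal ∧
      (μ (b ∩ S)).toReal ≤ (1 + e) * (μ S).toReal * (μ b).toReal := by
    intro b hbm
    obtain ⟨h1, h2⟩ := hb b hbm
    rcases eq_or_lt_of_le (ENNReal.toReal_nonneg : 0 ≤ (μ b).toReal) with hmb | hmb
    · have hb0 : μ b = 0 := by
        have hfin := measure_ne_top μ b
        simpa [ENNReal.toReal_eq_zero_iff, hfin] using hmb.symm
      have hbs0 : μ (b ∩ S) = 0 := measure_mono_null inter_subset_left hb0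
      simp [hbs0, ← hmb]
    · constructor
      · rw [div_mul_eq_mul_div, div_le_iff₀ (by linarith : (0:ℝ) < 1 + e)]
        rw [div_le_div_iff₀ (by linarith : (0:ℝ) < 1 + e) hmb] at h1
        linarith
      · rw [div_le_iff₀ hmb] at h2
        nlinarith
  set B := {b | b ∈ cylinders T α n' ∧ b ⊆ u} with hBdef
  have hdecS : μ (u ∩ S) = ∑' b : B, μ (↑b ∩ S) :=
    cyl_decomp hGM.measurable_T hGM.measurableSet hGM.pairwiseDisjoint hGM.cover
      hGM.countable hkn' hu S
  have hdecU : μ u = ∑' b : B, μ (b : Set X) := by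
    have h := cyl_decomp (μ := μ) hGM.measurable_T hGM.measurableSet hGM.pairwiseDisjoint
      hGM.cover hGM.countable hkn' hu univ
    simpa using h
  have hdecSr : (μ (u ∩ S)).toReal = ∑' b : B, (μ (↑b ∩ S)).toReal := by
    rw [hdecS, ENNReal.tsum_toReal_eq fun b => measure_ne_top _ _]
  have hdecUr : (μ u).toReal = ∑' b : B, (μ (b : Set X)).toReal := by
    rw [hdecU, ENNReal.tsum_toReal_eq fun b => measure_ne_top _ _]
  have hsumS : Summable fun b : B => (μ (↑b ∩ S)).toReal :=
    ENNReal.summable_toReal (by rw [← hdecS]; exact measure_ne_top _ _)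
  have hsumU : Summable fun b : B => (μ (b : Set X)).toReal :=
    ENNReal.summable_toReal (by rw [← hdecU]; exact measure_ne_top _ _)
  have hlow : (μ S).toReal / (1 + e) * (μ u).toReal ≤ (μ (u ∩ S)).toReal := by
    rw [hdecSr, hdecUr, ← tsum_mul_left]
    exact Summable.tsum_le_tsum (fun b => (key b b.2.1).1) (hsumU.mul_left _) hsumS
  have hhigh : (μ (u ∩ S)).toReal ≤ (1 + e) * (μ S).toReal * (μ u).toReal := by
    have h1 : (1 + e) * (μ S).toReal * (μ u).toReal
        = ∑' b : B, (1 + e) * (μ S).toReal * (μ (b : Set X)).toReal := by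
      rw [hdecUr, ← tsum_mul_left]
    rw [hdecSr, h1]
    exact Summable.tsum_le_tsum (fun b => (key b b.2.1).2) hsumS (hsumU.mul_left _)
  have hu1 : (μ u).toReal ≤ 1 := by
    have := prob_le_one (μ := μ) (s := u)
    simpa using ENNReal.toReal_mono ENNReal.one_ne_top this
  have hu0 : 0 ≤ (μ u).toReal := ENNReal.toReal_nonneg
  have hr0 : 0 ≤ (μ (u ∩ S)).toReal / (μ S).toReal :=
    div_nonneg ENNReal.toReal_nonneg ENNReal.toReal_nonneg
  have hr1 : (μ (u ∩ S)).toReal / (μ S).toReal ≤ (1 + e) * (μ u).toReal := by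
    rw [div_le_iff₀ hSpos]
    nlinarith
  have hr2 : (μ u).toReal ≤ (μ (u ∩ S)).toReal / (μ S).toReal * (1 + e) := by
    rw [div_mul_eq_mul_div, le_div_iff₀ hSpos]
    rw [div_mul_eq_mul_div, div_le_iff₀ (by linarith : (0:ℝ) < 1 + e)] at hlow
    nlinarith
  rw [Real.dist_eq, abs_sub_lt_iff]
  constructor
  · nlinarith
  · nlinarith
end
end

section
/- Let (X,μ,T,α) be a Gibbs–Markov map with full branches, G a countable discrete group with identity e, and ψ:X→G constant on each element of α. Write μ^n(e)=μ({x∈X : ψ_n(x)=e}). Then there exists D>0 such that μ^{n+m}(e) ≥ D·μ^n(e)·μ^m(e) for all n,m∈ℕ. -/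
set_option linter.unusedSectionVars false
set_option linter.unnecessarySimpa false


open MeasureTheory Filter Topology Set
open scoped ENNReal

noncomputable section

section Aux

variable {X : Type*} {G : Type*} [Monoid G] {T : X → X} {ψ : X → G} {φ : X → ℝ}
  {α : Set (Set X)}

/-- The cylinder determined by a choice of partition elements. -/
def cylFun (T : X → X) (α : Set (Set X)) (n : ℕ) (f : Fin n → ↥α) : Set X :=
  ⋂ j : Fin n, T^[(j : ℕ)] ⁻¹' (f j : Set X)

lemma mem_cylFun {n : ℕ} {f : Fin n → ↥α} {x : X} :
    x ∈ cylFun T α n f ↔ ∀ j : Fin n, T^[(j : ℕ)] x ∈ (f j : Set X) := by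
  simp [cylFun]

lemma cocycle_zero (x : X) : cocycle T ψ 0 x = 1 := rfl

lemma cocycle_succ (n : ℕ) (x : X) :
    cocycle T ψ (n + 1) x = ψ (T^[n] x) * cocycle T ψ n x := rfl

lemma cocycle_add (n m : ℕ) (x : X) :
    cocycle T ψ (n + m) x = cocycle T ψ m (T^[n] x) * cocycle T ψ n x := by
  induction m with
  | zero => simp [cocycle_zero]
  | succ m ih =>
      have : n + (m + 1) = (n + m) + 1 := rfl
      rw [this, cocycle_succ, ih, cocycle_succ, mul_assoc]
      congr 2
      rw [add_comm n m, Function.iterate_add_apply]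

lemma birkhoff_succ {X : Type*} {T : X → X} {φ : X → ℝ} (k : ℕ) (x : X) :
    birkhoff T φ (k + 1) x = birkhoff T φ k x + φ (T^[k] x) :=
  Finset.sum_range_succ _ _

lemma birkhoff_add (n m : ℕ) (x : X) :
    birkhoff T φ (n + m) x = birkhoff T φ n x + birkhoff T φ m (T^[n] x) := by
  induction m with
  | zero => simp [birkhoff]
  | succ m ih =>
      have h : n + (m + 1) = (n + m) + 1 := rfl
      rw [h, birkhoff_succ, ih, birkhoff_succ, add_assoc]
      congr 2
      rw [add_comm n m, Function.iterate_add_apply]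

lemma cylFun_append (n m : ℕ) (f : Fin n → ↥α) (g : Fin m → ↥α) :
    cylFun T α (n + m) (Fin.append f g) =
      cylFun T α n f ∩ T^[n] ⁻¹' (cylFun T α m g) := by
  ext x
  simp only [mem_cylFun, Set.mem_inter_iff, Set.mem_preimage]
  constructor
  · intro h
    refine ⟨fun j => ?_, fun j => ?_⟩
    · have := h (Fin.castAdd m j)
      rwa [Fin.append_left, Fin.coe_castAdd] at this
    · have := h (Fin.natAdd n j)
      rwa [Fin.append_right, Fin.coe_natAdd, add_comm n (j : ℕ),
        Function.iterate_add_apply] at this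
  · rintro ⟨h₁, h₂⟩ j
    refine Fin.addCases (fun i => ?_) (fun i => ?_) j
    · rw [Fin.append_left, Fin.coe_castAdd]; exact h₁ i
    · rw [Fin.append_right, Fin.coe_natAdd, add_comm n (i : ℕ),
        Function.iterate_add_apply]
      exact h₂ i

/-- The cocycle is constant on cylinders, if `ψ` is constant on partition elements. -/
lemma cocycle_const_on (hψ : ∀ a ∈ α, ∀ x ∈ a, ∀ y ∈ a, ψ x = ψ y) :
    ∀ (n : ℕ) (f : Fin n → ↥α) (x y : X), x ∈ cylFun T α n f → y ∈ cylFun T α n f →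
      cocycle T ψ n x = cocycle T ψ n y := by
  intro n
  induction n with
  | zero => intro f x y _ _; rfl
  | succ n ih =>
      intro f x y hx hy
      rw [mem_cylFun] at hx hy
      have hx' : x ∈ cylFun T α n (f ∘ Fin.castSucc) := by
        rw [mem_cylFun]; intro j
        have := hx (Fin.castSucc j); simpa using this
      have hy' : y ∈ cylFun T α n (f ∘ Fin.castSucc) := by
        rw [mem_cylFun]; intro j
        have := hy (Fin.castSucc j); simpa using this
      have h1 := ih (f ∘ Fin.castSucc) x y hx' hy'
      have hxl := hx (Fin.last n)
      have hyl := hy (Fin.last n)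
      rw [Fin.val_last] at hxl hyl
      rw [cocycle_succ, cocycle_succ, h1,
        hψ (f (Fin.last n)) (f (Fin.last n)).2 _ hxl _ hyl]

end Aux

section Meas

variable {X : Type*} [MetricSpace X] [MeasurableSpace X] [BorelSpace X]
  {G : Type*} [Group G] [Countable G]
  {μ : Measure X} {T : X → X} {α : Set (Set X)} {φ : X → ℝ} {ψ : X → G}

lemma measurableSet_cylFun (hGM : IsGibbsMarkov μ T α φ) (n : ℕ) (f : Fin n → ↥α) :
    MeasurableSet (cylFun T α n f) :=
  MeasurableSet.iInter fun j =>
    (hGM.measurable_T.iterate (j : ℕ)) (hGM.measurableSet _ (f j).2)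

lemma cylFun_nonempty (hGM : IsGibbsMarkov μ T α φ) :
    ∀ (n : ℕ) (f : Fin n → ↥α), (cylFun T α n f).Nonempty := by
  have hX : Nonempty X := by
    by_contra h
    rw [not_nonempty_iff] at h
    have := hGM.prob.measure_univ
    rw [Set.univ_eq_empty_iff.2 h, measure_empty] at this
    exact zero_ne_one this
  intro n
  induction n with
  | zero =>
      intro f
      simpa [cylFun] using (Set.univ_nonempty : (Set.univ : Set X).Nonempty)
  | succ n ih =>
      intro f
      obtain ⟨y, hy⟩ := ih (f ∘ Fin.succ)
      have hb := hGM.fullBranches (f 0) (f 0).2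
      obtain ⟨x, hx0, hTx⟩ := hb.2.2 (Set.mem_univ y)
      refine ⟨x, mem_cylFun.2 fun j => ?_⟩
      rcases Fin.eq_zero_or_eq_succ j with h | ⟨i, rfl⟩
      · subst h; simpa using hx0
      · have : (Fin.succ i : ℕ) = (i : ℕ) + 1 := rfl
        rw [this, Function.iterate_add_apply, Function.iterate_one, hTx]
        exact mem_cylFun.1 hy i

lemma cylFun_mem_cylinders (hGM : IsGibbsMarkov μ T α φ) (n : ℕ) (f : Fin n → ↥α) :
    cylFun T α n f ∈ cylinders T α n :=
  ⟨cylFun_nonempty hGM n f, fun j => (f j : Set X), fun j => (f j).2, rfl⟩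

lemma cylFun_disjoint (hGM : IsGibbsMarkov μ T α φ) {n : ℕ} {f g : Fin n → ↥α}
    (hfg : f ≠ g) : Disjoint (cylFun T α n f) (cylFun T α n g) := by
  obtain ⟨j, hj⟩ : ∃ j, f j ≠ g j := by
    by_contra h
    push_neg at h
    exact hfg (funext h)
  have hjs : (f j : Set X) ≠ (g j : Set X) := fun h => hj (Subtype.ext h)
  have hdisj := hGM.pairwiseDisjoint (f j).2 (g j).2 hjs
  rw [Set.disjoint_left]
  intro x hx hx'
  exact Set.disjoint_left.1 hdisj (mem_cylFun.1 hx j) (mem_cylFun.1 hx' j)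

/-- Every point lies in some cylinder. -/
lemma exists_cylFun_mem (hGM : IsGibbsMarkov μ T α φ) (n : ℕ) (x : X) :
    ∃ f : Fin n → ↥α, x ∈ cylFun T α n f := by
  have : ∀ j : Fin n, ∃ a : ↥α, T^[(j : ℕ)] x ∈ (a : Set X) := by
    intro j
    have : T^[(j : ℕ)] x ∈ ⋃₀ α := hGM.cover ▸ Set.mem_univ _
    obtain ⟨a, ha, hxa⟩ := this
    exact ⟨⟨a, ha⟩, hxa⟩
  choose f hf using this
  exact ⟨f, mem_cylFun.2 hf⟩

end Meas

section Main

variable {X : Type*} [MetricSpace X] [MeasurableSpace X] [BorelSpace X]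
  {G : Type*} [Group G] [Countable G]
  {μ : Measure X} {T : X → X} {α : Set (Set X)} {φ : X → ℝ} {ψ : X → G}

lemma fin_append_inj {A : Type*} {n m : ℕ} {f f' : Fin n → A} {g g' : Fin m → A}
    (h : Fin.append f g = Fin.append f' g') : f = f' ∧ g = g' := by
  constructor
  · funext j
    have := congrFun h (Fin.castAdd m j)
    rwa [Fin.append_left, Fin.append_left] at this
  · funext j
    have := congrFun h (Fin.natAdd n j)
    rwa [Fin.append_right, Fin.append_right] at this

lemma measure_levelSet (hGM : IsGibbsMarkov μ T α φ)
    (hψconst : ∀ a ∈ α, ∀ x ∈ a, ∀ y ∈ a, ψ x = ψ y) (n : ℕ) (g : G) :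
    μ {x | cocycle T ψ n x = g} =
      ∑' f : {f : Fin n → ↥α // ∀ x ∈ cylFun T α n f, cocycle T ψ n x = g},
        μ (cylFun T α n f.1) := by
  haveI : Countable ↥α := hGM.countable.to_subtype
  have hS : {x | cocycle T ψ n x = g} =
      ⋃ f : {f : Fin n → ↥α // ∀ x ∈ cylFun T α n f, cocycle T ψ n x = g},
        cylFun T α n f.1 := by
    ext x
    simp only [Set.mem_setOf_eq, Set.mem_iUnion]
    constructor
    · intro hx
      obtain ⟨f, hf⟩ := exists_cylFun_mem hGM n x
      refine ⟨⟨f, fun y hy => ?_⟩, hf⟩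
      rw [cocycle_const_on hψconst n f y x hy hf]
      exact hx
    · rintro ⟨f, hf⟩
      exact f.2 x hf
  rw [hS]
  exact measure_iUnion
    (fun p q hpq => cylFun_disjoint hGM (fun h => hpq (Subtype.ext h)))
    (fun f => measurableSet_cylFun hGM n f.1)

end Main

section Main2

variable {X : Type*} [MetricSpace X] [MeasurableSpace X] [BorelSpace X]
  {G : Type*} [Group G] [Countable G]
  {μ : Measure X} {T : X → X} {α : Set (Set X)} {φ : X → ℝ} {ψ : X → G}

lemma pair_estimate (hGM : IsGibbsMarkov μ T α φ) {C : ℝ} (hC1 : 1 ≤ C)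
    (hg : ∀ k : ℕ, ∀ c ∈ cylinders T α (k + 1), ∀ x ∈ c,
      (μ c).toReal / C ≤ Real.exp (birkhoff T φ (k + 1) x) ∧
      Real.exp (birkhoff T φ (k + 1) x) ≤ C * (μ c).toReal)
    (n m : ℕ) (f : Fin (n + 1) → ↥α) (g : Fin (m + 1) → ↥α) :
    μ (cylFun T α (n + 1) f) * μ (cylFun T α (m + 1) g) ≤
      ENNReal.ofReal (C ^ 3) * μ (cylFun T α (n + 1 + (m + 1)) (Fin.append f g)) := by
  haveI := hGM.prob
  have hCpos : (0 : ℝ) < C := lt_of_lt_of_le one_pos hC1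
  obtain ⟨x, hx⟩ := cylFun_nonempty hGM _ (Fin.append f g)
  have hx' : x ∈ cylFun T α (n + 1) f ∩ T^[n + 1] ⁻¹' (cylFun T α (m + 1) g) := by
    rw [← cylFun_append]; exact hx
  have e1 := (hg n _ (cylFun_mem_cylinders hGM _ f) x hx'.1).1
  have e2 := (hg m _ (cylFun_mem_cylinders hGM _ g) _ hx'.2).1
  have e3 := (hg (n + 1 + m) _ (cylFun_mem_cylinders hGM _ (Fin.append f g)) x hx).2
  set a := (μ (cylFun T α (n + 1) f)).toReal with ha
  set b := (μ (cylFun T α (m + 1) g)).toReal with hb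
  set c := (μ (cylFun T α (n + 1 + (m + 1)) (Fin.append f g))).toReal with hc
  have ha0 : 0 ≤ a := ENNReal.toReal_nonneg
  have hb0 : 0 ≤ b := ENNReal.toReal_nonneg
  have hc0 : 0 ≤ c := ENNReal.toReal_nonneg
  have hsplit : birkhoff T φ (n + 1 + (m + 1)) x =
      birkhoff T φ (n + 1) x + birkhoff T φ (m + 1) (T^[n + 1] x) :=
    birkhoff_add _ _ _
  have e3' : Real.exp (birkhoff T φ (n + 1) x) *
      Real.exp (birkhoff T φ (m + 1) (T^[n + 1] x)) ≤ C * c := by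
    rw [← Real.exp_add, ← hsplit]
    exact e3
  have hmain : a / C * (b / C) ≤ C * c :=
    le_trans (mul_le_mul e1 e2 (div_nonneg hb0 hCpos.le) (Real.exp_pos _).le) e3'
  have hreal : a * b ≤ C ^ 3 * c := by
    rw [div_mul_div_comm] at hmain
    have := (div_le_iff₀ (by positivity : (0:ℝ) < C * C)).1 hmain
    nlinarith [this]
  have := ENNReal.ofReal_le_ofReal hreal
  rw [ENNReal.ofReal_mul ha0, ENNReal.ofReal_mul (by positivity : (0:ℝ) ≤ C ^ 3)] at this
  rw [ha, hb, hc] at this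
  rwa [ENNReal.ofReal_toReal (measure_ne_top μ _), ENNReal.ofReal_toReal (measure_ne_top μ _),
    ENNReal.ofReal_toReal (measure_ne_top μ _)] at this

end Main2


/-- Almost supermultiplicativity of `μ^n(e) = μ({ψ_n = e})`:
there is `D > 0` with `μ^{n+m}(e) ≥ D·μ^n(e)·μ^m(e)` for all `n, m`. -/
theorem mun_supermultiplicative
    {X : Type*} [MetricSpace X] [MeasurableSpace X] [BorelSpace X]
    {G : Type*} [Group G] [Countable G]
    {μ : Measure X} {T : X → X} {α : Set (Set X)} {φ : X → ℝ}
    (hGM : IsGibbsMarkov μ T α φ)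
    {ψ : X → G}
    (hψconst : ∀ a ∈ α, ∀ x ∈ a, ∀ y ∈ a, ψ x = ψ y) :
    ∃ D > (0 : ℝ), ∀ n m : ℕ,
      D * (μ {x | cocycle T ψ n x = (1 : G)}).toReal *
          (μ {x | cocycle T ψ m x = (1 : G)}).toReal ≤
        (μ {x | cocycle T ψ (n + m) x = (1 : G)}).toReal := by
  haveI := hGM.prob
  haveI : Countable ↥α := hGM.countable.to_subtype
  obtain ⟨C₀, hC₀, hg₀⟩ := hGM.gibbs
  set C := max C₀ 1 with hCdef
  have hC1 : (1 : ℝ) ≤ C := le_max_right _ _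
  have hCpos : (0 : ℝ) < C := lt_of_lt_of_le one_pos hC1
  have hg : ∀ k : ℕ, ∀ c ∈ cylinders T α (k + 1), ∀ x ∈ c,
      (μ c).toReal / C ≤ Real.exp (birkhoff T φ (k + 1) x) ∧
      Real.exp (birkhoff T φ (k + 1) x) ≤ C * (μ c).toReal := by
    intro k c hc x hx
    obtain ⟨h1, h2⟩ := hg₀ k c hc x hx
    constructor
    · refine le_trans ?_ h1
      gcongr
      exact le_max_left _ _
    · refine h2.trans ?_
      gcongr
      exact le_max_left _ _
  have hD0 : (0 : ℝ) < (C ^ 3)⁻¹ := by positivity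
  have hD1 : (C ^ 3)⁻¹ ≤ 1 := by
    rw [inv_le_one_iff₀]
    right
    exact one_le_pow₀ hC1
  refine ⟨(C ^ 3)⁻¹, hD0, ?_⟩
  intro n m
  have hnn : ∀ k : ℕ, (0 : ℝ) ≤ (μ {x | cocycle T ψ k x = (1 : G)}).toReal :=
    fun k => ENNReal.toReal_nonneg
  match n, m with
  | 0, m =>
      have h0 : {x : X | cocycle T ψ 0 x = 1} = Set.univ := by
        ext x; simp [cocycle_zero]
      rw [h0, measure_univ, ENNReal.toReal_one, mul_one, Nat.zero_add]
      nlinarith [hnn m]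
  | (n + 1), 0 =>
      have h0 : {x : X | cocycle T ψ 0 x = 1} = Set.univ := by
        ext x; simp [cocycle_zero]
      rw [h0, measure_univ, ENNReal.toReal_one, mul_one, Nat.add_zero]
      nlinarith [hnn (n + 1)]
  | (n + 1), (m + 1) =>
      -- the essential case
      set An := {f : Fin (n + 1) → ↥α //
        ∀ x ∈ cylFun T α (n + 1) f, cocycle T ψ (n + 1) x = (1 : G)}
      set Am := {f : Fin (m + 1) → ↥α //
        ∀ x ∈ cylFun T α (m + 1) f, cocycle T ψ (m + 1) x = (1 : G)}
      have hn := measure_levelSet hGM hψconst (n + 1) (1 : G)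
      have hm := measure_levelSet hGM hψconst (m + 1) (1 : G)
      -- union of appended cylinders sits inside the level set for n+m+2
      have hsub : ∀ (p : An × Am),
          cylFun T α (n + 1 + (m + 1)) (Fin.append p.1.1 p.2.1) ⊆
            {x | cocycle T ψ (n + 1 + (m + 1)) x = (1 : G)} := by
        rintro ⟨f, g⟩ x hx
        have hx' : x ∈ cylFun T α (n + 1) f.1 ∩
            T^[n + 1] ⁻¹' (cylFun T α (m + 1) g.1) := by
          rw [← cylFun_append]; exact hx
        have h1 : cocycle T ψ (n + 1) x = 1 := f.2 x hx'.1
        have h2 : cocycle T ψ (m + 1) (T^[n + 1] x) = 1 := g.2 _ hx'.2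
        show cocycle T ψ (n + 1 + (m + 1)) x = 1
        rw [cocycle_add, h1, h2, one_mul]
      have hdisj : Pairwise (Function.onFun Disjoint fun p : An × Am =>
          cylFun T α (n + 1 + (m + 1)) (Fin.append p.1.1 p.2.1)) := by
        rintro ⟨f, g⟩ ⟨f', g'⟩ hpq
        refine cylFun_disjoint hGM fun h => hpq ?_
        obtain ⟨h1, h2⟩ := fin_append_inj h
        exact Prod.ext (Subtype.ext h1) (Subtype.ext h2)
      have hunion :
          (∑' p : An × Am, μ (cylFun T α (n + 1 + (m + 1)) (Fin.append p.1.1 p.2.1))) ≤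
            μ {x | cocycle T ψ (n + 1 + (m + 1)) x = (1 : G)} := by
        rw [← measure_iUnion hdisj
          (fun p => measurableSet_cylFun hGM _ (Fin.append p.1.1 p.2.1))]
        exact measure_mono (Set.iUnion_subset hsub)
      -- product of sums
      have hprod : μ {x | cocycle T ψ (n + 1) x = (1 : G)} *
            μ {x | cocycle T ψ (m + 1) x = (1 : G)} =
          ∑' p : An × Am, μ (cylFun T α (n + 1) p.1.1) * μ (cylFun T α (m + 1) p.2.1) := by
        rw [hn, hm, ENNReal.tsum_prod']
        rw [← ENNReal.tsum_mul_right]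
        congr 1
        funext f
        rw [← ENNReal.tsum_mul_left]
      have hle : μ {x | cocycle T ψ (n + 1) x = (1 : G)} *
            μ {x | cocycle T ψ (m + 1) x = (1 : G)} ≤
          ENNReal.ofReal (C ^ 3) * μ {x | cocycle T ψ (n + 1 + (m + 1)) x = (1 : G)} := by
        rw [hprod]
        calc ∑' p : An × Am, μ (cylFun T α (n + 1) p.1.1) * μ (cylFun T α (m + 1) p.2.1)
            ≤ ∑' p : An × Am, ENNReal.ofReal (C ^ 3) *
                μ (cylFun T α (n + 1 + (m + 1)) (Fin.append p.1.1 p.2.1)) :=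
              ENNReal.tsum_le_tsum fun p => pair_estimate hGM hC1 hg n m p.1.1 p.2.1
          _ = ENNReal.ofReal (C ^ 3) *
                ∑' p : An × Am, μ (cylFun T α (n + 1 + (m + 1)) (Fin.append p.1.1 p.2.1)) :=
              ENNReal.tsum_mul_left
          _ ≤ _ := mul_le_mul_right hunion _
      -- pass to reals
      have hfin1 : μ {x | cocycle T ψ (n + 1) x = (1 : G)} *
          μ {x | cocycle T ψ (m + 1) x = (1 : G)} ≠ ⊤ :=
        ENNReal.mul_ne_top (measure_ne_top μ _) (measure_ne_top μ _)
      have hfin2 : ENNReal.ofReal (C ^ 3) *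
          μ {x | cocycle T ψ (n + 1 + (m + 1)) x = (1 : G)} ≠ ⊤ :=
        ENNReal.mul_ne_top ENNReal.ofReal_ne_top (measure_ne_top μ _)
      have hreal := ENNReal.toReal_le_toReal hfin1 hfin2 |>.2 hle
      rw [ENNReal.toReal_mul, ENNReal.toReal_mul,
        ENNReal.toReal_ofReal (by positivity : (0:ℝ) ≤ C ^ 3)] at hreal
      have h3 : (0 : ℝ) < C ^ 3 := by positivity
      rw [mul_assoc]
      rw [inv_mul_le_iff₀ h3]
      exact hreal
end
end
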